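/- Let A ∈ M_{r×n}(ℤ) and let V ∈ M_n(ℤ) be unimodular with A·V = [I_r | 0]; write V = [V_𝔞 | V_𝔟] (first r and last n−r columns) and W = V⁻¹ = [W_𝔞 ; W_𝔟] (first r and last n−r rows). Let f be a function of n nonzero real variables that is T_A-invariant. Then f(z) = f((z^{V_𝔟})^{W_𝔟}) for every z ∈ (ℝ∖{0})^n at which both sides are defined. Equivalently, every rational invariant of the scaling action of A can be rewritten as a function of the n−r generating invariants y = z^{V_𝔟} via the substitution z ↦ y^{W_𝔟}. -/

import Mathlib

lemma zpow_sum_aux {ι : Type*} (x : ℝ) (hx : x ≠ 0) (s : Finset ι) (c : ι → ℤ) :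
    x ^ (∑ i ∈ s, c i) = ∏ i ∈ s, x ^ c i := by
  classical
  induction s using Finset.induction with
  | empty => simp
  | insert _ _ h ih => rw [Finset.sum_insert h, Finset.prod_insert h, zpow_add₀ hx, ih]

/-- rewriting invariants via generating invariants.  Let
`A ∈ M_{r×n}(ℤ)` and let `V` be unimodular with `A·V = [I_r | 0]`, `V = [V_𝔞 | V_𝔟]`,
`W = V⁻¹ = [W_𝔞 ; W_𝔟]`.  If `f` is a `T_A`-invariant function of `n` nonzero real
variables, then `f(z) = f((z^{V_𝔟})^{W_𝔟})` for all `z` with nonzero entries: every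
rational invariant can be rewritten in the generating invariants `y = z^{V_𝔟}` via
`z ↦ y^{W_𝔟}`. -/
theorem invariant_rewriting (n r p : ℕ) (hn : n = r + p)
    (A : Matrix (Fin r) (Fin n) ℤ)
    (V : Matrix (Fin n) (Fin r ⊕ Fin p) ℤ)
    (W : Matrix (Fin r ⊕ Fin p) (Fin n) ℤ)
    (hVW : V * W = 1) (hWV : W * V = 1)
    (hAV : A * V = Matrix.fromCols 1 0)
    (f : (Fin n → ℝ) → ℝ)
    (hinv : ∀ (lam : Fin r → ℝ), (∀ k, lam k ≠ 0) →
      ∀ z : Fin n → ℝ, (∀ i, z i ≠ 0) →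
        f (fun i => (∏ k, lam k ^ A k i) * z i) = f z)
    (z : Fin n → ℝ) (hz : ∀ i, z i ≠ 0) :
    f z = f (fun i =>
      ∏ j : Fin p, (∏ i' : Fin n, z i' ^ V i' (Sum.inr j)) ^ W (Sum.inr j) i) := by
  classical
  -- A is the first r rows of W
  have hA : ∀ k i, A k i = W (Sum.inl k) i := by
    have h1 : A * (V * W) = A := by rw [hVW, Matrix.mul_one]
    have h2 : A = (Matrix.fromCols 1 0 : Matrix (Fin r) (Fin r ⊕ Fin p) ℤ) * W := by
      rw [← hAV, Matrix.mul_assoc, h1]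
    intro k i
    rw [h2]
    simp [Matrix.mul_apply, Fintype.sum_sum_type, Matrix.fromCols, Matrix.one_apply]
  set y : (Fin r ⊕ Fin p) → ℝ := fun s => ∏ i', z i' ^ V i' s with hy_def
  have hy : ∀ s, y s ≠ 0 := fun s => Finset.prod_ne_zero_iff.mpr
    (fun i _ => zpow_ne_zero _ (hz i))
  set z' : Fin n → ℝ := fun i => ∏ j, y (Sum.inr j) ^ W (Sum.inr j) i with hz'_def
  have hz' : ∀ i, z' i ≠ 0 := fun i => Finset.prod_ne_zero_iff.mpr
    (fun j _ => zpow_ne_zero _ (hy _))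
  have key : ∀ i, (∏ k, (y (Sum.inl k)) ^ A k i) * z' i = z i := by
    intro i
    have step1 : (∏ k, (y (Sum.inl k)) ^ A k i) * z' i
        = ∏ s : Fin r ⊕ Fin p, y s ^ W s i := by
      rw [Fintype.prod_sum_type]
      congr 1
      exact Finset.prod_congr rfl (fun k _ => by rw [hA])
    rw [step1]
    have step2 : ∀ s : Fin r ⊕ Fin p, y s ^ W s i = ∏ i', z i' ^ (V i' s * W s i) := by
      intro s
      rw [hy_def]
      rw [← Finset.prod_zpow]
      exact Finset.prod_congr rfl (fun i' _ => by
        rw [zpow_mul])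
    calc (∏ s : Fin r ⊕ Fin p, y s ^ W s i)
        = ∏ s : Fin r ⊕ Fin p, ∏ i', z i' ^ (V i' s * W s i) := by
          exact Finset.prod_congr rfl (fun s _ => step2 s)
      _ = ∏ i', ∏ s : Fin r ⊕ Fin p, z i' ^ (V i' s * W s i) := Finset.prod_comm
      _ = ∏ i', z i' ^ (∑ s : Fin r ⊕ Fin p, V i' s * W s i) := by
          exact Finset.prod_congr rfl (fun i' _ => (zpow_sum_aux _ (hz i') _ _).symm)
      _ = ∏ i', z i' ^ ((V * W) i' i) := by
          exact Finset.prod_congr rfl (fun i' _ => by rw [Matrix.mul_apply])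
      _ = ∏ i', z i' ^ ((1 : Matrix (Fin n) (Fin n) ℤ) i' i) := by rw [hVW]
      _ = z i := by
          rw [Finset.prod_eq_single i (fun i' _ hne => by
            simp [Matrix.one_apply, hne]) (by simp)]
          simp [Matrix.one_apply]
  have := hinv (fun k => y (Sum.inl k)) (fun k => hy _) z' hz'
  calc f z = f (fun i => (∏ k, (y (Sum.inl k)) ^ A k i) * z' i) := by
        exact congrArg f (funext fun i => (key i).symm)
    _ = f z' := this
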